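/- Let G be a graph with a (Δ+1)-colouring γ, let i, j be colours with Δ+1 ∉ {i, j}, and let C be the vertex set of a connected component of the subgraph of G induced by colours i and j. Then the colouring γ' obtained from γ by swapping colours i and j on C (γ'(v) = j if v ∈ C and γ(v) = i, γ'(v) = i if v ∈ C and γ(v) = j, γ'(v) = γ(v) otherwise) is a proper (Δ+1)-colouring, and γ' is reachable from γ in R_{Δ+1}(G) by a sequence of at most 3|C| single-vertex recolourings. -/

import Mathlib

/-- `β` is reachable from `α` in the reconfiguration graph of proper
`Fin k`-colourings of `G` by a path of length at most `N`: there is a sequence of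
proper colourings, consecutive ones disagreeing on exactly one vertex. -/
def Reach {V : Type} {k : ℕ} (G : SimpleGraph V) (α β : V → Fin k) (N : ℕ) : Prop :=
  ∃ (m : ℕ) (f : ℕ → V → Fin k), m ≤ N ∧ f 0 = α ∧ f m = β ∧
    (∀ i, i ≤ m → ∀ u v, G.Adj u v → f i u ≠ f i v) ∧
    ∀ i, i < m → ∃! v, f i v ≠ f (i + 1) v


lemma reach_mono {V : Type} {k : ℕ} {G : SimpleGraph V} {α β : V → Fin k} {N N' : ℕ}
    (h : Reach G α β N) (hN : N ≤ N') : Reach G α β N' := by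
  obtain ⟨m, f, h1, h2⟩ := h
  exact ⟨m, f, h1.trans hN, h2⟩

lemma reach_trans {V : Type} {k : ℕ} {G : SimpleGraph V} {α β δ : V → Fin k} {N₁ N₂ : ℕ}
    (h1 : Reach G α β N₁) (h2 : Reach G β δ N₂) : Reach G α δ (N₁ + N₂) := by
  obtain ⟨m₁, f₁, hm₁, hs₁, he₁, hp₁, hu₁⟩ := h1
  obtain ⟨m₂, f₂, hm₂, hs₂, he₂, hp₂, hu₂⟩ := h2
  refine ⟨m₁ + m₂, fun n => if n ≤ m₁ then f₁ n else f₂ (n - m₁),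
    Nat.add_le_add hm₁ hm₂, by simp [hs₁], ?_, ?_, ?_⟩
  · by_cases h : m₁ + m₂ ≤ m₁
    · have hz : m₂ = 0 := by omega
      simp only [h, if_pos]
      rw [hz] at he₂ ⊢
      rw [Nat.add_zero, he₁, ← hs₂, he₂]
    · simp only [h, if_false, Nat.add_sub_cancel_left, he₂, ite_false]
  · intro n hn u v hadj
    by_cases h : n ≤ m₁
    · simpa [h] using hp₁ n h u v hadj
    · simpa [h] using hp₂ (n - m₁) (by omega) u v hadj
  · intro n hn
    by_cases h : n < m₁
    · have h1 : n ≤ m₁ := le_of_lt h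
      have h2 : n + 1 ≤ m₁ := h
      simpa [h1, h2] using hu₁ n h
    · have hg : (if n ≤ m₁ then f₁ n else f₂ (n - m₁)) = f₂ (n - m₁) := by
        by_cases h' : n ≤ m₁
        · have : n = m₁ := by omega
          subst this
          simp [he₁, ← hs₂]
        · simp [h']
      have h3 : ¬ (n + 1 ≤ m₁) := by omega
      have h4 : n + 1 - m₁ = (n - m₁) + 1 := by omega
      simpa [hg, h3, h4] using hu₂ (n - m₁) (by omega)

lemma reach_step {V : Type} [Fintype V] [DecidableEq V] {k : ℕ} (G : SimpleGraph V)
    (α β : V → Fin k)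
    (hα : ∀ u v, G.Adj u v → α u ≠ α v)
    (hβ : ∀ u v, G.Adj u v → β u ≠ β v)
    (hmix : ∀ u v, G.Adj u v → α u ≠ β u → β u ≠ α v) :
    Reach G α β ({v | α v ≠ β v}.ncard) := by
  classical
  set A : Set V := {v | α v ≠ β v} with hA
  have hAfin : A.Finite := Set.toFinite _
  set l : List V := hAfin.toFinset.toList with hl
  have hnodup : l.Nodup := Finset.nodup_toList _
  have hmem : ∀ v, v ∈ l ↔ v ∈ A := by
    intro v; rw [hl, Finset.mem_toList, Set.Finite.mem_toFinset]
  have hlen : l.length = A.ncard := by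
    rw [hl, Finset.length_toList, Set.ncard_eq_toFinset_card]
  refine ⟨l.length, fun n v => if v ∈ l.take n then β v else α v, le_of_eq hlen,
    by simp, ?_, ?_, ?_⟩
  · funext v
    simp only [List.take_length]
    by_cases hv : v ∈ l
    · simp [hv]
    · have : α v = β v := by
        by_contra hne
        exact hv ((hmem v).mpr hne)
      simp [hv, this]
  · intro n _ u v hadj
    by_cases hu : u ∈ l.take n <;> by_cases hv : v ∈ l.take n <;>
      simp only [hu, hv, if_pos, if_neg, if_true, if_false]
    · exact hβ u v hadj
    · by_cases heq : α u = β u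
      · rw [← heq]; exact hα u v hadj
      · exact hmix u v hadj heq
    · by_cases heq : α v = β v
      · rw [← heq]; exact hα u v hadj
      · exact fun h => (hmix v u hadj.symm heq) h.symm
    · exact hα u v hadj
  · intro n hn
    have htake : l.take (n + 1) = l.take n ++ [l[n]] := by
      rw [List.take_succ]
      simp [List.getElem?_eq_getElem hn]
    have hnotmem : l[n] ∉ l.take n := by
      have hsplit : l.take n ++ l.drop n = l := List.take_append_drop n l
      have hdrop : l.drop n = l[n] :: l.drop (n + 1) := List.drop_eq_getElem_cons hn
      have := hnodup
      rw [← hsplit, List.nodup_append] at this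
      intro hmem'
      exact this.2.2 _ hmem' _ (by rw [hdrop]; exact List.mem_cons_self ..) rfl
    have hmemA : l[n] ∈ A := (hmem _).mp (List.getElem_mem hn)
    refine ⟨l[n], ?_, ?_⟩
    · have h1 : l[n] ∈ l.take (n+1) := by rw [htake]; exact List.mem_append_right _ (by simp)
      show (if l[n] ∈ l.take n then β l[n] else α l[n]) ≠
        (if l[n] ∈ l.take (n+1) then β l[n] else α l[n])
      rw [if_neg hnotmem, if_pos h1]
      exact hmemA
    · intro v hv
      by_contra hne
      apply hv
      show (if v ∈ l.take n then β v else α v) = (if v ∈ l.take (n+1) then β v else α v)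
      have hmem'' : (v ∈ l.take (n+1)) ↔ (v ∈ l.take n) := by
        rw [htake]
        simp only [List.mem_append, List.mem_singleton]
        constructor
        · rintro (h | h)
          · exact h
          · exact absurd h hne
        · exact Or.inl
      by_cases h : v ∈ l.take n
      · rw [if_pos h, if_pos (hmem''.mpr h)]
      · rw [if_neg h, if_neg (fun hh => h (hmem''.mp hh))]

/-- swapping two colours i, j ≠ Δ+1 on a connected component C of the
subgraph induced by the vertices coloured i or j gives a proper colouring,
reachable from γ by at most 3|C| single-vertex recolourings (assuming colour Δ+1
is not used on C or on any neighbour of C). -/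
theorem swap_colours_on_component {V : Type} [Fintype V] [DecidableEq V]
    (G : SimpleGraph V) [DecidableRel G.Adj] (Δ : ℕ) (hmax : G.maxDegree = Δ)
    (γ : V → Fin (Δ + 1))
    (hproper : ∀ u v, G.Adj u v → γ u ≠ γ v)
    (i j : Fin (Δ + 1)) (hi : i ≠ Fin.last Δ) (hj : j ≠ Fin.last Δ) (hij : i ≠ j)
    (S : Set V) (hS : S = {v | γ v = i ∨ γ v = j})
    (c : (G.induce S).ConnectedComponent)
    (C : Set V)
    (hC : C = {v : V | ∃ h : v ∈ S, (G.induce S).connectedComponentMk ⟨v, h⟩ = c})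
    (hfar : ∀ v : V, (v ∈ C ∨ ∃ u ∈ C, G.Adj u v) → γ v ≠ Fin.last Δ) :
    ∃ γ' : V → Fin (Δ + 1),
      (∀ v ∈ C, γ v = i → γ' v = j) ∧
      (∀ v ∈ C, γ v = j → γ' v = i) ∧
      (∀ v, v ∉ C → γ' v = γ v) ∧
      (∀ u v, G.Adj u v → γ' u ≠ γ' v) ∧
      Reach G γ γ' (3 * C.ncard) := by
  classical
  -- basic membership facts
  have hCij : ∀ v ∈ C, γ v = i ∨ γ v = j := by
    intro v hv
    rw [hC] at hv
    obtain ⟨hvs, _⟩ := hv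
    rw [hS] at hvs
    exact hvs
  have hclose : ∀ u v, u ∈ C → G.Adj u v → (γ v = i ∨ γ v = j) → v ∈ C := by
    intro u v hu hadj hv
    rw [hC] at hu ⊢
    obtain ⟨hus, huc⟩ := hu
    have hvs : v ∈ S := by rw [hS]; exact hv
    refine ⟨hvs, ?_⟩
    rw [← huc]
    have hadj' : (G.induce S).Adj ⟨v, hvs⟩ ⟨u, hus⟩ := hadj.symm
    exact SimpleGraph.ConnectedComponent.sound hadj'.reachable
  have hnbr : ∀ u v, u ∈ C → G.Adj u v → v ∉ C →
      γ v ≠ i ∧ γ v ≠ j ∧ γ v ≠ Fin.last Δ := by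
    intro u v hu hadj hv
    refine ⟨?_, ?_, hfar v (Or.inr ⟨u, hu, hadj⟩)⟩
    · intro h; exact hv (hclose u v hu hadj (Or.inl h))
    · intro h; exact hv (hclose u v hu hadj (Or.inr h))
  -- the three colourings
  set γ₁ : V → Fin (Δ + 1) :=
    fun v => if v ∈ C ∧ γ v = i then Fin.last Δ else γ v with hγ₁
  set γ₂ : V → Fin (Δ + 1) :=
    fun v => if v ∈ C ∧ γ v = i then Fin.last Δ
      else if v ∈ C ∧ γ v = j then i else γ v with hγ₂
  set γ' : V → Fin (Δ + 1) :=
    fun v => if v ∈ C ∧ γ v = i then j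
      else if v ∈ C ∧ γ v = j then i else γ v with hγ'
  -- value lemmas
  have hv1i : ∀ v, v ∈ C → γ v = i → γ₁ v = Fin.last Δ := by
    intro v hv h; simp only [hγ₁]; rw [if_pos ⟨hv, h⟩]
  have hv1j : ∀ v, v ∈ C → γ v = j → γ₁ v = j := by
    intro v hv h; simp only [hγ₁]; rw [if_neg, h]
    rintro ⟨_, h'⟩; exact hij (h'.symm.trans h)
  have hv1o : ∀ v, v ∉ C → γ₁ v = γ v := by
    intro v hv; simp only [hγ₁]; rw [if_neg]
    rintro ⟨h, _⟩; exact hv h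
  have hv2i : ∀ v, v ∈ C → γ v = i → γ₂ v = Fin.last Δ := by
    intro v hv h; simp only [hγ₂]; rw [if_pos ⟨hv, h⟩]
  have hv2j : ∀ v, v ∈ C → γ v = j → γ₂ v = i := by
    intro v hv h; simp only [hγ₂]
    rw [if_neg, if_pos ⟨hv, h⟩]
    rintro ⟨_, h'⟩; exact hij (h'.symm.trans h)
  have hv2o : ∀ v, v ∉ C → γ₂ v = γ v := by
    intro v hv; simp only [hγ₂]
    rw [if_neg, if_neg] <;> (rintro ⟨h, _⟩; exact hv h)
  have hv'i : ∀ v, v ∈ C → γ v = i → γ' v = j := by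
    intro v hv h; simp only [hγ']; rw [if_pos ⟨hv, h⟩]
  have hv'j : ∀ v, v ∈ C → γ v = j → γ' v = i := by
    intro v hv h; simp only [hγ']
    rw [if_neg, if_pos ⟨hv, h⟩]
    rintro ⟨_, h'⟩; exact hij (h'.symm.trans h)
  have hv'o : ∀ v, v ∉ C → γ' v = γ v := by
    intro v hv; simp only [hγ']
    rw [if_neg, if_neg] <;> (rintro ⟨h, _⟩; exact hv h)
  -- properness of γ₁
  have hp1 : ∀ u v, G.Adj u v → γ₁ u ≠ γ₁ v := by
    intro u v hadj
    have hne := hproper u v hadj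
    by_cases hu : u ∈ C
    · by_cases hv : v ∈ C
      · rcases hCij u hu with hui | huj <;> rcases hCij v hv with hvi | hvj
        · exact absurd (hui.trans hvi.symm) hne
        · rw [hv1i u hu hui, hv1j v hv hvj]; exact (Ne.symm hj)
        · rw [hv1j u hu huj, hv1i v hv hvi]; exact hj
        · exact absurd (huj.trans hvj.symm) hne
      · have hf := hnbr u v hu hadj hv
        rcases hCij u hu with hui | huj
        · rw [hv1i u hu hui, hv1o v hv]; exact (hf.2.2).symm
        · rw [hv1j u hu huj, hv1o v hv]; exact (hf.2.1).symm
    · by_cases hv : v ∈ C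
      · have hf := hnbr v u hv hadj.symm hu
        rcases hCij v hv with hvi | hvj
        · rw [hv1o u hu, hv1i v hv hvi]; exact hf.2.2
        · rw [hv1o u hu, hv1j v hv hvj]; exact hf.2.1
      · rw [hv1o u hu, hv1o v hv]; exact hne
  have hm1 : ∀ u v, G.Adj u v → γ u ≠ γ₁ u → γ₁ u ≠ γ v := by
    intro u v hadj hdiff
    by_cases hu : u ∈ C ∧ γ u = i
    · rw [hv1i u hu.1 hu.2]
      exact (hfar v (Or.inr ⟨u, hu.1, hadj⟩)).symm
    · exfalso; apply hdiff
      simp only [hγ₁]; rw [if_neg hu]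
  -- properness of γ₂
  have hp2 : ∀ u v, G.Adj u v → γ₂ u ≠ γ₂ v := by
    intro u v hadj
    have hne := hproper u v hadj
    by_cases hu : u ∈ C
    · by_cases hv : v ∈ C
      · rcases hCij u hu with hui | huj <;> rcases hCij v hv with hvi | hvj
        · exact absurd (hui.trans hvi.symm) hne
        · rw [hv2i u hu hui, hv2j v hv hvj]; exact (Ne.symm hi)
        · rw [hv2j u hu huj, hv2i v hv hvi]; exact hi
        · exact absurd (huj.trans hvj.symm) hne
      · have hf := hnbr u v hu hadj hv
        rcases hCij u hu with hui | huj
        · rw [hv2i u hu hui, hv2o v hv]; exact (hf.2.2).symm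
        · rw [hv2j u hu huj, hv2o v hv]; exact (hf.1).symm
    · by_cases hv : v ∈ C
      · have hf := hnbr v u hv hadj.symm hu
        rcases hCij v hv with hvi | hvj
        · rw [hv2o u hu, hv2i v hv hvi]; exact hf.2.2
        · rw [hv2o u hu, hv2j v hv hvj]; exact hf.1
      · rw [hv2o u hu, hv2o v hv]; exact hne
  have hm2 : ∀ u v, G.Adj u v → γ₁ u ≠ γ₂ u → γ₂ u ≠ γ₁ v := by
    intro u v hadj hdiff
    have hu : u ∈ C ∧ γ u = j := by
      by_contra hu
      apply hdiff
      by_cases hu' : u ∈ C ∧ γ u = i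
      · rw [hv1i u hu'.1 hu'.2, hv2i u hu'.1 hu'.2]
      · simp only [hγ₁, hγ₂, if_neg hu, if_neg hu']
    rw [hv2j u hu.1 hu.2]
    by_cases hv : v ∈ C
    · rcases hCij v hv with hvi | hvj
      · rw [hv1i v hv hvi]; exact hi
      · rw [hv1j v hv hvj]; exact hij
    · rw [hv1o v hv]
      exact ((hnbr u v hu.1 hadj hv).1).symm
  -- properness of γ'
  have hp3 : ∀ u v, G.Adj u v → γ' u ≠ γ' v := by
    intro u v hadj
    have hne := hproper u v hadj
    by_cases hu : u ∈ C
    · by_cases hv : v ∈ C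
      · rcases hCij u hu with hui | huj <;> rcases hCij v hv with hvi | hvj
        · exact absurd (hui.trans hvi.symm) hne
        · rw [hv'i u hu hui, hv'j v hv hvj]; exact (Ne.symm hij)
        · rw [hv'j u hu huj, hv'i v hv hvi]; exact hij
        · exact absurd (huj.trans hvj.symm) hne
      · have hf := hnbr u v hu hadj hv
        rcases hCij u hu with hui | huj
        · rw [hv'i u hu hui, hv'o v hv]; exact (hf.2.1).symm
        · rw [hv'j u hu huj, hv'o v hv]; exact (hf.1).symm
    · by_cases hv : v ∈ C
      · have hf := hnbr v u hv hadj.symm hu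
        rcases hCij v hv with hvi | hvj
        · rw [hv'o u hu, hv'i v hv hvi]; exact hf.2.1
        · rw [hv'o u hu, hv'j v hv hvj]; exact hf.1
      · rw [hv'o u hu, hv'o v hv]; exact hne
  have hm3 : ∀ u v, G.Adj u v → γ₂ u ≠ γ' u → γ' u ≠ γ₂ v := by
    intro u v hadj hdiff
    have hu : u ∈ C ∧ γ u = i := by
      by_contra hu
      apply hdiff
      by_cases hu' : u ∈ C ∧ γ u = j
      · rw [hv2j u hu'.1 hu'.2, hv'j u hu'.1 hu'.2]
      · simp only [hγ₂, hγ', if_neg hu, if_neg hu']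
    rw [hv'i u hu.1 hu.2]
    by_cases hv : v ∈ C
    · rcases hCij v hv with hvi | hvj
      · rw [hv2i v hv hvi]; exact hj
      · rw [hv2j v hv hvj]; exact (Ne.symm hij)
    · rw [hv2o v hv]
      exact ((hnbr u v hu.1 hadj hv).2.1).symm
  -- reachability
  have r1 := reach_step G γ γ₁ hproper hp1 hm1
  have r2 := reach_step G γ₁ γ₂ hp1 hp2 hm2
  have r3 := reach_step G γ₂ γ' hp2 hp3 hm3
  have r := reach_trans (reach_trans r1 r2) r3
  have hd1 : {v | γ v ≠ γ₁ v} ⊆ C := by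
    intro v hv
    by_contra hvc
    exact hv (hv1o v hvc).symm
  have hd2 : {v | γ₁ v ≠ γ₂ v} ⊆ C := by
    intro v hv
    by_contra hvc
    exact hv ((hv1o v hvc).trans (hv2o v hvc).symm)
  have hd3 : {v | γ₂ v ≠ γ' v} ⊆ C := by
    intro v hv
    by_contra hvc
    exact hv ((hv2o v hvc).trans (hv'o v hvc).symm)
  have e1 := Set.ncard_le_ncard hd1 (Set.toFinite C)
  have e2 := Set.ncard_le_ncard hd2 (Set.toFinite C)
  have e3 := Set.ncard_le_ncard hd3 (Set.toFinite C)
  refine ⟨γ', hv'i, hv'j, hv'o, hp3, reach_mono r (by omega)⟩
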